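/- Let X(x) = a x^4 + 4b x^3 + 6c x^2 + 4d x + e be a quartic and define g2 = a e - 4 b d + 3 c^2 and g3 = a c e + 2 b c d - a d^2 - e b^2 - c^3. Then for s defined implicitly via the Euler integral, the discriminant-type identity holds: if s = (1/4)((√X(x) - √X(y))/(x-y))^2 - a(x+y)^2/4 - b(x+y) - c (with X(x), X(y) ≥ 0 and x ≠ y), then 4s^3 - g2 s - g3 = ((Y1 x + Y2)√X(x) - (X1 y + X2)√X(y))^2/(x-y)^6, where X1 = a x^3 + 3b x^2 + 3c x + d, X2 = b x^3 + 3c x^2 + 3d x + e, and Y1, Y2 are the same polynomials evaluated at y. -/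

import Mathlib

set_option maxHeartbeats 4000000 in
set_option maxRecDepth 100000 in
/-- Euler's discriminant-type identity for the algebraic integral `s` of the quartic
`X(t) = a t⁴ + 4b t³ + 6c t² + 4d t + e`. -/
theorem stmt0 (a b c d e x y : ℝ) (hxy : x ≠ y)
    (hX : 0 ≤ a * x ^ 4 + 4 * b * x ^ 3 + 6 * c * x ^ 2 + 4 * d * x + e)
    (hY : 0 ≤ a * y ^ 4 + 4 * b * y ^ 3 + 6 * c * y ^ 2 + 4 * d * y + e)
    (s : ℝ)
    (hs : s = (1 / 4) * ((Real.sqrt (a * x ^ 4 + 4 * b * x ^ 3 + 6 * c * x ^ 2 + 4 * d * x + e)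
            - Real.sqrt (a * y ^ 4 + 4 * b * y ^ 3 + 6 * c * y ^ 2 + 4 * d * y + e)) / (x - y)) ^ 2
          - a * (x + y) ^ 2 / 4 - b * (x + y) - c) :
    4 * s ^ 3 - (a * e - 4 * b * d + 3 * c ^ 2) * s
        - (a * c * e + 2 * b * c * d - a * d ^ 2 - e * b ^ 2 - c ^ 3)
      = (((a * y ^ 3 + 3 * b * y ^ 2 + 3 * c * y + d) * x
            + (b * y ^ 3 + 3 * c * y ^ 2 + 3 * d * y + e))
            * Real.sqrt (a * x ^ 4 + 4 * b * x ^ 3 + 6 * c * x ^ 2 + 4 * d * x + e)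
         - ((a * x ^ 3 + 3 * b * x ^ 2 + 3 * c * x + d) * y
            + (b * x ^ 3 + 3 * c * x ^ 2 + 3 * d * x + e))
            * Real.sqrt (a * y ^ 4 + 4 * b * y ^ 3 + 6 * c * y ^ 2 + 4 * d * y + e)) ^ 2
        / (x - y) ^ 6 := by
  have hu : x - y ≠ 0 := sub_ne_zero.mpr hxy
  set P := Real.sqrt (a * x ^ 4 + 4 * b * x ^ 3 + 6 * c * x ^ 2 + 4 * d * x + e) with hPdef
  set Q := Real.sqrt (a * y ^ 4 + 4 * b * y ^ 3 + 6 * c * y ^ 2 + 4 * d * y + e) with hQdef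
  have hP : P ^ 2 = a * x ^ 4 + 4 * b * x ^ 3 + 6 * c * x ^ 2 + 4 * d * x + e :=
    Real.sq_sqrt hX
  have hQ : Q ^ 2 = a * y ^ 4 + 4 * b * y ^ 3 + 6 * c * y ^ 2 + 4 * d * y + e :=
    Real.sq_sqrt hY
  subst hs
  rw [eq_div_iff (pow_ne_zero 6 hu)]
  have ht : (P - Q) / (x - y) * (x - y) = P - Q := div_mul_cancel₀ _ hu
  generalize (P - Q) / (x - y) = t at ht ⊢
  linear_combination ((1/16 : ℝ) * ((t * (x - y))^5 + (t * (x - y))^4*(P - Q) + (t * (x - y))^3*(P - Q)^2 + (t * (x - y))^2*(P - Q)^3 + (t * (x - y))*(P - Q)^4 + (P - Q)^5) + (-3 * ((a * (x + y) ^ 2 / 4 + b * (x + y) + c) * (x - y) ^ 2) / 4) * ((t * (x - y))^3 + (t * (x - y))^2*(P - Q) + (t * (x - y))*(P - Q)^2 + (P - Q)^3) + (3 * ((a * (x + y) ^ 2 / 4 + b * (x + y) + c) * (x - y) ^ 2) ^ 2 - (a * e - 4 * b * d + 3 * c ^ 2) * (x - y) ^ 4 / 4) * ((t * (x - y)) +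 (P - Q))) * ht + (((1/16 : ℝ) * ((P - Q)^4 + (P - Q)^2 * ((a * x ^ 4 + 4 * b * x ^ 3 + 6 * c * x ^ 2 + 4 * d * x + e) + (a * y ^ 4 + 4 * b * y ^ 3 + 6 * c * y ^ 2 + 4 * d * y + e) - 2 * P * Q) + ((a * x ^ 4 + 4 * b * x ^ 3 + 6 * c * x ^ 2 + 4 * d * x + e) + (a * y ^ 4 + 4 * b * y ^ 3 + 6 * c * y ^ 2 + 4 * d * y + e) - 2 * P * Q)^2) + (-3 * ((a * (x + y) ^ 2 / 4 + b * (x + y) + c) * (x - y) ^ 2) / 4) * ((P - Q)^2 + ((a * x ^ 4 + 4 * b * x ^ 3 + 6 * c * x ^ 2 + 4 * d * x + e) + (a * y ^ 4 + 4 * b * y ^ 3 + 6 * c * y ^ 2 + 4 * d * y + e) - 2 * P * Q)) + (3 * ((a * (x + y) ^ 2 / 4 + b * (x + y) + c) * (x - y) ^ 2) ^ 2 - (a * e - 4 * b * d + 3 * c ^ 2) * (x - y) ^ 4 / 4)) + (12 * (1/16 : ℝ) * ((a * x ^ 4 + 4 * b * x ^ 3 + 6 * c * x ^ 2 + 4 *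 d * x + e) + (a * y ^ 4 + 4 * b * y ^ 3 + 6 * c * y ^ 2 + 4 * d * y + e)) + 4 * (-3 * ((a * (x + y) ^ 2 / 4 + b * (x + y) + c) * (x - y) ^ 2) / 4) - 8 * (1/16 : ℝ) * (P * Q)) * Q ^ 2 - ((a * y ^ 3 + 3 * b * y ^ 2 + 3 * c * y + d) * x + (b * y ^ 3 + 3 * c * y ^ 2 + 3 * d * y + e)) ^ 2) * hP + (((1/16 : ℝ) * ((P - Q)^4 + (P - Q)^2 * ((a * x ^ 4 + 4 * b * x ^ 3 + 6 * c * x ^ 2 + 4 * d * x + e) + (a * y ^ 4 + 4 * b * y ^ 3 + 6 * c * y ^ 2 + 4 * d * y + e) - 2 * P * Q) + ((a * x ^ 4 + 4 * b * x ^ 3 + 6 * c * x ^ 2 + 4 * d * x + e) + (a * y ^ 4 + 4 * b * y ^ 3 + 6 * c * y ^ 2 + 4 * d * y + e) - 2 * P * Q)^2) + (-3 * ((a * (x + y) ^ 2 / 4 + b * (x + y) + c) * (x - y) ^ 2) / 4) * ((P - Q)^2 + ((a * x ^ 4 + 4 * b * x ^ 3 + 6 * c * x ^ 2 + 4 * d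 * x + e) + (a * y ^ 4 + 4 * b * y ^ 3 + 6 * c * y ^ 2 + 4 * d * y + e) - 2 * P * Q)) + (3 * ((a * (x + y) ^ 2 / 4 + b * (x + y) + c) * (x - y) ^ 2) ^ 2 - (a * e - 4 * b * d + 3 * c ^ 2) * (x - y) ^ 4 / 4)) + (12 * (1/16 : ℝ) * ((a * x ^ 4 + 4 * b * x ^ 3 + 6 * c * x ^ 2 + 4 * d * x + e) + (a * y ^ 4 + 4 * b * y ^ 3 + 6 * c * y ^ 2 + 4 * d * y + e)) + 4 * (-3 * ((a * (x + y) ^ 2 / 4 + b * (x + y) + c) * (x - y) ^ 2) / 4) - 8 * (1/16 : ℝ) * (P * Q)) * (a * x ^ 4 + 4 * b * x ^ 3 + 6 * c * x ^ 2 + 4 * d * x + e) - ((a * x ^ 3 + 3 * b * x ^ 2 + 3 * c * x + d) * y + (b * x ^ 3 + 3 * c * x ^ 2 + 3 * d * x + e)) ^ 2) * hQ
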